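/- Let P = MvPolynomial (Fin 2) ℤ with variables x₁, x₂, let I be the ideal generated by x₁² + x₂² and x₁²·x₂², and let R = P ⧸ I. Then the classes of the eight monomials x₁^a·x₂^b with 0 ≤ a ≤ 3 and 0 ≤ b ≤ 1 form a basis of R as a ℤ-module; in particular R is a free ℤ-module of rank 8 (this realizes the integral cohomology ring of the flag manifold Sp(2)/T², whose rank equals the order of the Weyl group of type B₂). -/

import Mathlib

namespace Stmt12

noncomputable section

/-- The polynomial ring `P = ℤ[x₁, x₂]`. -/
abbrev P := MvPolynomial (Fin 2) ℤ

def x₁ : P := MvPolynomial.X 0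
def x₂ : P := MvPolynomial.X 1

/-- The ideal generated by `x₁² + x₂²` and `x₁²·x₂²`. -/
def I : Ideal P := Ideal.span {x₁ ^ 2 + x₂ ^ 2, x₁ ^ 2 * x₂ ^ 2}

/-- The quotient ring, realizing `H^*(Sp(2)/T²; ℤ)`. -/
abbrev R := P ⧸ I

open Polynomial AdjoinRoot

abbrev A := AdjoinRoot ((X : Polynomial ℤ) ^ 4)

abbrev u : A := root ((X : Polynomial ℤ) ^ 4)

abbrev q : Polynomial A := X ^ 2 + C (u ^ 2)

abbrev B := AdjoinRoot q

abbrev v : B := root q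

lemma hA : ((X : Polynomial ℤ) ^ 4).Monic := monic_X_pow 4

instance : Nontrivial A := AdjoinRoot.nontrivial _ (by rw [degree_X_pow]; decide)

lemma hq : (q).Monic := monic_X_pow_add_C _ two_ne_zero

lemma u4 : u ^ 4 = 0 := by
  have := mk_self (f := (X : Polynomial ℤ) ^ 4)
  simpa [u, map_pow, mk_X] using this

lemma v2 : v ^ 2 = - algebraMap A B (u ^ 2) := by
  have h := mk_self (f := q)
  rw [map_add, map_pow, mk_X, mk_C, ← AdjoinRoot.algebraMap_eq] at h
  exact eq_neg_of_add_eq_zero_left h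

lemma mem1 : x₁ ^ 2 + x₂ ^ 2 ∈ I := Ideal.subset_span (Set.mem_insert _ _)
lemma mem2 : x₁ ^ 2 * x₂ ^ 2 ∈ I :=
  Ideal.subset_span (Set.mem_insert_of_mem _ rfl)

lemma mem_x14 : x₁ ^ 4 ∈ I := by
  have h : x₁ ^ 4 = x₁ ^ 2 * (x₁ ^ 2 + x₂ ^ 2) - x₁ ^ 2 * x₂ ^ 2 := by ring
  rw [h]
  exact sub_mem (Ideal.mul_mem_left _ _ mem1) mem2

lemma mk_x1_pow4 : (Ideal.Quotient.mk I x₁) ^ 4 = 0 := by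
  rw [← map_pow, Ideal.Quotient.eq_zero_iff_mem]
  exact mem_x14

/-- `A →ₐ[ℤ] R` sending `u ↦ x₁`. -/
def ψA : A →ₐ[ℤ] R :=
  liftAlgHom _ (Algebra.ofId ℤ R) (Ideal.Quotient.mk I x₁) (by
    simp [mk_x1_pow4])

lemma ψA_u : ψA u = Ideal.Quotient.mk I x₁ := by
  simp only [ψA, u, liftAlgHom_root]

lemma eval2_q : eval₂ (ψA.toRingHom) (Ideal.Quotient.mk I x₂) q = 0 := by
  have h2 : (ψA.toRingHom) (u ^ 2) = (Ideal.Quotient.mk I x₁) ^ 2 := by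
    rw [map_pow]; exact congrArg (· ^ 2) ψA_u
  rw [eval₂_add, eval₂_pow, eval₂_X, eval₂_C, h2, ← map_pow, ← map_pow, ← map_add,
    Ideal.Quotient.eq_zero_iff_mem, add_comm]
  exact mem1

/-- `B →ₐ[ℤ] R` sending `v ↦ x₂` and (via `A`) `u ↦ x₁`. -/
def ψ : B →ₐ[ℤ] R :=
  (AdjoinRoot.lift ψA.toRingHom (Ideal.Quotient.mk I x₂) eval2_q).toIntAlgHom

lemma ψ_v : ψ v = Ideal.Quotient.mk I x₂ := by
  show AdjoinRoot.lift ψA.toRingHom (Ideal.Quotient.mk I x₂) eval2_q (root q) = _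
  exact lift_root eval2_q
lemma ψ_alg (a : A) : ψ (algebraMap A B a) = ψA a := by
  rw [AdjoinRoot.algebraMap_eq]
  show AdjoinRoot.lift ψA.toRingHom (Ideal.Quotient.mk I x₂) eval2_q (of q a) = _
  exact lift_of eval2_q

/-- `P →ₐ[ℤ] B`. -/
def φ : P →ₐ[ℤ] B := MvPolynomial.aeval ![algebraMap A B u, v]

lemma φ_x1 : φ x₁ = algebraMap A B u := by
  simp [φ, x₁]
lemma φ_x2 : φ x₂ = v := by
  simp [φ, x₂]

lemma φ_gen1 : φ (x₁ ^ 2 + x₂ ^ 2) = 0 := by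
  rw [map_add, map_pow, map_pow, φ_x1, φ_x2, v2, ← map_pow]
  exact add_neg_cancel _

lemma φ_gen2 : φ (x₁ ^ 2 * x₂ ^ 2) = 0 := by
  rw [map_mul, map_pow, map_pow, φ_x1, φ_x2, v2, ← map_pow, mul_neg, ← map_mul, ← pow_add]
  norm_num [u4]

lemma hker : ∀ a ∈ I, φ a = 0 := by
  have hle : I ≤ RingHom.ker (φ : P →+* B) := by
    rw [I, Ideal.span_le]
    rintro p hp
    rcases hp with rfl | rfl
    · simpa [RingHom.mem_ker] using φ_gen1
    · simpa [RingHom.mem_ker] using φ_gen2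
  intro a ha
  exact hle ha

/-- `R →ₐ[ℤ] B`. -/
def φq : R →ₐ[ℤ] B := Ideal.Quotient.liftₐ I φ hker

lemma φq_mk (p : P) : φq (Ideal.Quotient.mk I p) = φ p := rfl

lemma comp_alg (a : A) : φq (ψ (algebraMap A B a)) = algebraMap A B a := by
  have h : (φq.comp ψA : A →ₐ[ℤ] B) = IsScalarTower.toAlgHom ℤ A B := by
    apply AdjoinRoot.algHom_ext
    show φq (ψA u) = algebraMap A B u
    rw [ψA_u, φq_mk, φ_x1]
  rw [ψ_alg]
  exact congrFun (congrArg (↑·) h) a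

lemma comp_left : φq.comp ψ = AlgHom.id ℤ B := by
  apply AlgHom.ext
  intro b
  obtain ⟨p, rfl⟩ := AdjoinRoot.mk_surjective b
  induction p using Polynomial.induction_on' with
  | add p r hp hr => rw [map_add, map_add, map_add, hp, hr]
  | monomial n a =>
    rw [← C_mul_X_pow_eq_monomial, map_mul, map_pow, mk_X, mk_C, ← AdjoinRoot.algebraMap_eq]
    simp only [map_mul, map_pow, AlgHom.coe_id, id_eq, AlgHom.comp_apply]
    rw [comp_alg, ψ_v, φq_mk, φ_x2]

lemma comp_right : ψ.comp φq = AlgHom.id ℤ R := by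
  apply Ideal.Quotient.algHom_ext
  apply MvPolynomial.algHom_ext
  intro i
  fin_cases i <;> simp only [AlgHom.comp_apply, Ideal.Quotient.mkₐ_eq_mk, AlgHom.coe_id, id_eq]
  · show ψ (φq (Ideal.Quotient.mk I x₁)) = _
    rw [φq_mk, φ_x1, ψ_alg, ψA_u]
    rfl
  · show ψ (φq (Ideal.Quotient.mk I x₂)) = _
    rw [φq_mk, φ_x2, ψ_v]
    rfl

/-- The algebra isomorphism `B ≃ₐ[ℤ] R`. -/
def e : B ≃ₐ[ℤ] R := AlgEquiv.ofAlgHom ψ φq comp_right comp_left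

def pbA : PowerBasis ℤ A := powerBasis' hA
def pbB : PowerBasis A B := powerBasis' hq

lemma hnA : ((X : Polynomial ℤ) ^ 4).natDegree = 4 := natDegree_X_pow 4
lemma hnB : (q).natDegree = 2 := natDegree_X_pow_add_C

def eqv : (Fin ((X : Polynomial ℤ) ^ 4).natDegree × Fin (q).natDegree) ≃ (Fin 4 × Fin 2) :=
  Equiv.prodCongr (finCongr hnA) (finCongr hnB)

def bR : Module.Basis (Fin 4 × Fin 2) ℤ R :=
  ((pbA.basis.smulTower pbB.basis).reindex eqv).map e.toLinearEquiv

lemma bR_apply (i : Fin 4 × Fin 2) :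
    bR i = Ideal.Quotient.mk I (x₁ ^ (i.1 : ℕ) * x₂ ^ (i.2 : ℕ)) := by
  obtain ⟨i, j⟩ := i
  rw [bR, Module.Basis.map_apply]
  erw [Module.Basis.reindex_apply]
  rw [Module.Basis.smulTower_apply,
    pbA.basis_eq_pow, pbB.basis_eq_pow]
  rw [Algebra.smul_def, map_pow]
  show ψ (algebraMap A B u ^ (i : ℕ) * root q ^ (j : ℕ)) = _
  rw [map_mul, map_pow, map_pow, ψ_alg, ψA_u, ψ_v, ← map_pow, ← map_pow, ← map_mul]

/-- The classes of the eight monomials `x₁^a·x₂^b`, `0 ≤ a ≤ 3`, `0 ≤ b ≤ 1`, form a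
basis of `R` as a `ℤ`-module; in particular `R` is free of rank `8`, the order of the
Weyl group of type `B₂`. -/
theorem basis_monomials :
    (∃ b : Module.Basis (Fin 4 × Fin 2) ℤ R,
      ∀ i : Fin 4 × Fin 2,
        b i = Ideal.Quotient.mk I (x₁ ^ (i.1 : ℕ) * x₂ ^ (i.2 : ℕ))) ∧
    Module.Free ℤ R ∧ Module.finrank ℤ R = 8 := by
  refine ⟨⟨bR, bR_apply⟩, Module.Free.of_basis bR, ?_⟩
  rw [Module.finrank_eq_card_basis bR]
  simp

end

end Stmt12
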